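/- (Paper's Proposition.) Let x be a schedule and let j be a job that belongs to H(x), i.e. j occupies some position k ≥ 2 on some machine i in x and C_{i,k−1}(x, r⁻) ≥ r⁺ j. Then C_max(x, r̄^j) = C_max(x, r⁻) and Q(x, r̄^j) ≤ Q(x, r⁻), where r⁻ denotes the all-lower-bounds scenario. -/

import Mathlib

open Finset

/-- A schedule assigns to each machine a finite sequence of jobs such that
every job occurs exactly once among all the sequences. -/
structure Schedule (m n : ℕ) where
  seq : Fin m → List (Fin n)
  valid : ∀ j : Fin n, (∑ i : Fin m, (seq i).count j) = 1

variable {m n : ℕ}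

/-- Completion time after processing the list `L` of jobs on a machine with
processing times `q` and release dates `r`; recursively `C₀ = 0`,
`C_k = q j_k + max C_{k-1} (r j_k)`. -/
def mComp (q r : Fin n → ℝ) (L : List (Fin n)) : ℝ :=
  L.foldl (fun c j => q j + max c (r j)) 0

/-- Makespan of the schedule `x` under the release dates `r`. -/
noncomputable def Cmax (p : Fin m → Fin n → ℝ) (x : Schedule m n) (r : Fin n → ℝ) : ℝ :=
  ⨆ i : Fin m, mComp (p i) r (x.seq i)

/-- Optimal makespan `C*(r)`: the minimum of `Cmax` over all schedules. -/
noncomputable def Cstar (p : Fin m → Fin n → ℝ) (r : Fin n → ℝ) : ℝ :=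
  ⨅ x : Schedule m n, Cmax p x r

/-- Regret of schedule `x` under scenario `r`. -/
noncomputable def regret (p : Fin m → Fin n → ℝ) (x : Schedule m n) (r : Fin n → ℝ) : ℝ :=
  Cmax p x r - Cstar p r

/-- The scenario box determined by the interval bounds. -/
def box (rlo rhi : Fin n → ℝ) : Set (Fin n → ℝ) :=
  {r | ∀ j, rlo j ≤ r j ∧ r j ≤ rhi j}

/-- Worst-case regret `Z(x)`. -/
noncomputable def Zreg (p : Fin m → Fin n → ℝ) (x : Schedule m n) (rlo rhi : Fin n → ℝ) : ℝ :=
  sSup ((fun r => regret p x r) '' box rlo rhi)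

/-- Extreme scenario `r̄^j`. -/
def extSc (rlo rhi : Fin n → ℝ) (j : Fin n) : Fin n → ℝ :=
  Function.update rlo j (rhi j)

/-- The set `H(x)` of jobs whose release interval is covered by the
processing of their predecessors (positions are 0-indexed: job at position
`k ≥ 1` has predecessors `(x.seq i).take k`). -/
def Hset (p : Fin m → Fin n → ℝ) (rlo rhi : Fin n → ℝ) (x : Schedule m n) : Set (Fin n) :=
  {j | ∃ i : Fin m, ∃ k : ℕ, 1 ≤ k ∧ (x.seq i)[k]? = some j ∧
    rhi j ≤ mComp (p i) rlo ((x.seq i).take k)}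

/-- Lower bound `LB₁(r) = max_j (r j + min_i p i j)`. -/
noncomputable def LB1 (p : Fin m → Fin n → ℝ) (r : Fin n → ℝ) : ℝ :=
  ⨆ j : Fin n, (r j + ⨅ i : Fin m, p i j)

/-- Lower bound `LB(r) = min_j r j + m⁻¹ ∑_j min_i p i j`. -/
noncomputable def LB0 (p : Fin m → Fin n → ℝ) (r : Fin n → ℝ) : ℝ :=
  (⨅ j : Fin n, r j) + (m : ℝ)⁻¹ * ∑ j : Fin n, ⨅ i : Fin m, p i j

/-- `E_j(r)`: the jobs unavailable before `j`. -/
noncomputable def Ej (r : Fin n → ℝ) (j : Fin n) : Finset (Fin n) :=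
  Finset.univ.filter fun t => r j ≤ r t

lemma Ej_nonempty (r : Fin n → ℝ) (j : Fin n) : (Ej r j).Nonempty :=
  ⟨j, by simp [Ej]⟩

/-- `W_j(E_j(r), p)` from the paper. -/
noncomputable def W2 (p : Fin m → Fin n → ℝ) (r : Fin n → ℝ) (j : Fin n) : ℝ :=
  (Ej r j).inf' (Ej_nonempty r j) r + (m : ℝ)⁻¹ * ∑ t ∈ Ej r j, ⨅ i : Fin m, p i t

/-- Lower bound `LB₂(r)`. -/
noncomputable def LB2 (p : Fin m → Fin n → ℝ) (r : Fin n → ℝ) : ℝ :=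
  ⨆ j : Fin n, W2 p r j

/-- `W̃_j(E_j(r), p_w)` from the paper, with `λ_j = ⌈|E_j(r)|/m⌉`. -/
noncomputable def W3 (p : Fin m → Fin n → ℝ) (r : Fin n → ℝ) (j : Fin n) : ℝ :=
  (Ej r j).inf' (Ej_nonempty r j) r +
    (⌈((Ej r j).card : ℝ) / (m : ℝ)⌉ : ℝ) *
      (Ej r j).inf' (Ej_nonempty r j) (fun t => ⨅ i : Fin m, p i t)

/-- Lower bound `LB₃(r)`. -/
noncomputable def LB3 (p : Fin m → Fin n → ℝ) (r : Fin n → ℝ) : ℝ :=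
  ⨆ j : Fin n, W3 p r j

/-- The combined lower bound `LB(r̄) = max {LB₁, LB₂, LB₃}`. -/
noncomputable def LBall (p : Fin m → Fin n → ℝ) (r : Fin n → ℝ) : ℝ :=
  max (LB1 p r) (max (LB2 p r) (LB3 p r))

private lemma foldl_congr_r (q r r' : Fin n → ℝ) (L : List (Fin n))
    (h : ∀ a ∈ L, r a = r' a) : ∀ c : ℝ,
    L.foldl (fun c j => q j + max c (r j)) c
      = L.foldl (fun c j => q j + max c (r' j)) c := by
  induction L with
  | nil => intro c; rfl
  | cons a L ih =>
    intro c
    simp only [List.foldl_cons]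
    rw [h a (by simp), ih (fun a ha => h a (by simp [ha]))]

private lemma foldl_mono_r (q r r' : Fin n → ℝ) (h : ∀ a, r a ≤ r' a) (L : List (Fin n)) :
    ∀ c c' : ℝ, c ≤ c' →
    L.foldl (fun c j => q j + max c (r j)) c
      ≤ L.foldl (fun c j => q j + max c (r' j)) c' := by
  induction L with
  | nil => intro c c' hcc; exact hcc
  | cons a L ih =>
    intro c c' hcc
    simp only [List.foldl_cons]
    exact ih _ _ (add_le_add_right (max_le_max hcc (h a)) _)

private lemma le_foldl (q r : Fin n → ℝ) (hq : ∀ a, 0 ≤ q a) (L : List (Fin n)) :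
    ∀ c : ℝ, c ≤ L.foldl (fun c j => q j + max c (r j)) c := by
  induction L with
  | nil => intro c; exact le_rfl
  | cons a L ih =>
    intro c
    calc c ≤ q a + max c (r a) := by
            have := le_max_left c (r a); have := hq a; linarith
    _ ≤ _ := ih _

private lemma schedule_nonempty (hm : 0 < m) : Nonempty (Schedule m n) := by
  refine ⟨⟨fun i => if i = ⟨0, hm⟩ then List.finRange n else [], ?_⟩⟩
  intro j
  rw [Finset.sum_eq_single (⟨0, hm⟩ : Fin m)]
  · simp [List.count_eq_one_of_mem (List.nodup_finRange n) (List.mem_finRange j)]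
  · intro i _ hi; simp [hi]
  · simp

private lemma mComp_nonneg (q r : Fin n → ℝ) (hq : ∀ a, 0 ≤ q a) (L : List (Fin n)) :
    0 ≤ mComp q r L := le_foldl q r hq L 0

private lemma Cmax_nonneg (hm : 0 < m) (p : Fin m → Fin n → ℝ) (hp : ∀ i j, 0 < p i j)
    (x : Schedule m n) (r : Fin n → ℝ) : 0 ≤ Cmax p x r := by
  haveI : Nonempty (Fin m) := ⟨⟨0, hm⟩⟩
  exact le_ciSup_of_le (Set.Finite.bddAbove (Set.finite_range _)) ⟨0, hm⟩
    (mComp_nonneg _ _ (fun a => (hp _ a).le) _)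

/-- Paper's Proposition: if `j ∈ H(x)` then the extreme
scenario `r̄^j` yields the same makespan as the all-lower-bounds scenario
`r⁻`, and its regret is no larger. -/
theorem Hset_scenario_dominated {m n : ℕ} (hm : 0 < m)
    (p : Fin m → Fin n → ℝ) (hp : ∀ i j, 0 < p i j)
    (rlo rhi : Fin n → ℝ) (hlo : ∀ j, 0 ≤ rlo j) (hlt : ∀ j, rlo j < rhi j)
    (x : Schedule m n) (j : Fin n) (hj : j ∈ Hset p rlo rhi x) :
    Cmax p x (extSc rlo rhi j) = Cmax p x rlo ∧
      regret p x (extSc rlo rhi j) ≤ regret p x rlo := by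
  obtain ⟨i, k, hk1, hget, hC⟩ := hj
  set r' : Fin n → ℝ := extSc rlo rhi j with hr'
  have hr'j : r' j = rhi j := Function.update_self _ _ _
  have hr'ne : ∀ t, t ≠ j → r' t = rlo t := fun t ht => Function.update_of_ne ht _ _
  have hle : ∀ t, rlo t ≤ r' t := by
    intro t
    by_cases ht : t = j
    · subst ht; rw [hr'j]; exact (hlt t).le
    · rw [hr'ne t ht]
  obtain ⟨hlen, hgetk⟩ := List.getElem?_eq_some_iff.mp hget
  set L := x.seq i with hL
  have hmem : j ∈ L := hgetk ▸ List.getElem_mem hlen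
  -- counts
  have hsum := x.valid j
  have hci1 : 1 ≤ L.count j := List.count_pos_iff.mpr hmem
  have hsum' : L.count j + ∑ i' ∈ Finset.univ.erase i, (x.seq i').count j = 1 :=
    (Finset.add_sum_erase Finset.univ (fun i' => (x.seq i').count j)
      (Finset.mem_univ i)).trans hsum
  have hcount1 : L.count j = 1 := le_antisymm (by omega) hci1
  have hrest : ∀ i', i' ≠ i → (x.seq i').count j = 0 := by
    intro i' hi'
    have h0 : ∑ i' ∈ Finset.univ.erase i, (x.seq i').count j = 0 := by omega
    have := (Finset.sum_eq_zero_iff).mp h0 i' (Finset.mem_erase.mpr ⟨hi', Finset.mem_univ _⟩)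
    exact this
  -- decomposition of L
  have hdecomp : L = L.take k ++ j :: L.drop (k + 1) := by
    conv_lhs => rw [← List.take_append_drop k L]
    rw [List.drop_eq_getElem_cons hlen, hgetk]
  have hcnt : L.count j = (L.take k).count j + (1 + (L.drop (k + 1)).count j) := by
    conv_lhs => rw [hdecomp]
    simp [List.count_append, List.count_cons_self]
    ring
  have hnt : j ∉ L.take k := by
    intro h
    have := List.count_pos_iff.mpr h
    omega
  have hnd : j ∉ L.drop (k + 1) := by
    intro h
    have := List.count_pos_iff.mpr h
    omega
  -- mComp equal on every machine
  have hcomp : ∀ i' : Fin m, mComp (p i') r' (x.seq i') = mComp (p i') rlo (x.seq i') := by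
    intro i'
    by_cases hi' : i' = i
    · subst hi'
      unfold mComp
      conv_lhs => rw [← hL, hdecomp]
      conv_rhs => rw [← hL, hdecomp]
      rw [List.foldl_append, List.foldl_append]
      have htake : (L.take k).foldl (fun c t => p i' t + max c (r' t)) 0
          = (L.take k).foldl (fun c t => p i' t + max c (rlo t)) 0 := by
        apply foldl_congr_r
        intro a ha
        exact hr'ne a (fun h => hnt (h ▸ ha))
      rw [htake]
      set c := (L.take k).foldl (fun c t => p i' t + max c (rlo t)) 0 with hc
      have hC' : rhi j ≤ c := hC
      simp only [List.foldl_cons]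
      have h1 : max c (r' j) = c := by rw [hr'j]; exact max_eq_left hC'
      have h2 : max c (rlo j) = c := max_eq_left ((hlt j).le.trans hC')
      rw [h1, h2]
      apply foldl_congr_r
      intro a ha
      exact hr'ne a (fun h => hnd (h ▸ ha))
    · apply foldl_congr_r
      intro a ha
      have : a ≠ j := by
        intro h; subst h
        have := List.count_pos_iff.mpr ha
        rw [hrest i' hi'] at this
        omega
      exact hr'ne a this
  have hCmax : Cmax p x r' = Cmax p x rlo := by
    unfold Cmax
    exact iSup_congr hcomp
  refine ⟨hCmax, ?_⟩
  unfold regret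
  rw [hCmax]
  have hCstar : Cstar p rlo ≤ Cstar p r' := by
    haveI := schedule_nonempty (n := n) hm
    apply ciInf_mono
    · exact ⟨0, by rintro _ ⟨y, rfl⟩; exact Cmax_nonneg hm p hp y rlo⟩
    · intro y
      haveI : Nonempty (Fin m) := ⟨⟨0, hm⟩⟩
      apply ciSup_mono (Set.Finite.bddAbove (Set.finite_range _))
      intro i'
      exact foldl_mono_r _ _ _ hle _ 0 0 le_rfl
  linarith
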